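/- Let C₁,…,C_N be positive semidefinite self-adjoint bounded operators on a Hilbert space H, w₁,…,w_N > 0 with Σ wᵢ = 1, and let u ∈ H with ‖u‖ = 1 satisfy Σᵢ wᵢ ⟨u, Cᵢu⟩^{1/2} > 0. Set x_u = (Σᵢ wᵢ ⟨u, Cᵢu⟩^{1/2})² and X_u = x_u (u⊗u). Then X_u is a fixed point of the map G(X) = Σᵢ wᵢ (X^{1/2} Cᵢ X^{1/2})^{1/2}, i.e. G(X_u) = X_u; moreover X = 0 is also a fixed point of G. -/

import Mathlib

/-- Let `C₁,…,C_N` be positive self-adjoint bounded operators on a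
Hilbert space `H`, `w₁,…,w_N > 0` with `∑ wᵢ = 1`, and `u ∈ H` with `‖u‖ = 1` satisfying
`∑ᵢ wᵢ⟨u, Cᵢu⟩^{1/2} > 0`.  With `x_u = (∑ᵢ wᵢ⟨u, Cᵢu⟩^{1/2})²` and
`X_u = x_u (u⊗u)`, `X_u` is a fixed point of `G(X) = ∑ᵢ wᵢ (X^{1/2} Cᵢ X^{1/2})^{1/2}`,
and `X = 0` is also a fixed point of `G`.  The square roots (of `X_u`, of `0`, and of
`X^{1/2} Cᵢ X^{1/2}`) are represented as the unique positive operators with the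
corresponding squares. -/

lemma sqrt_rankone {H : Type*} [NormedAddCommGroup H] [InnerProductSpace ℝ H] [CompleteSpace H]
    (u : H) (hu : ‖u‖ = 1) (c : ℝ) (Y : H →L[ℝ] H) (hY : Y.IsPositive)
    (hY2 : Y ∘L Y = c • ((innerSL ℝ u).smulRight u)) :
    Y = Real.sqrt c • ((innerSL ℝ u).smulRight u) := by
  have hsym : ∀ x y : H, (inner ℝ (Y x) y : ℝ) = inner ℝ x (Y y) :=
    hY.1
  have huu : (inner ℝ u u : ℝ) = 1 := by
    rw [real_inner_self_eq_norm_sq, hu]; norm_num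
  have happ : ∀ v : H, Y (Y v) = (c * inner ℝ u v) • u := by
    intro v
    have : (Y ∘L Y) v = (c • ((innerSL ℝ u).smulRight u)) v := by rw [hY2]
    simpa [ContinuousLinearMap.smul_apply, ContinuousLinearMap.smulRight_apply,
      smul_smul] using this
  -- Y kills u-perp
  have hker : ∀ v : H, (inner ℝ u v : ℝ) = 0 → Y v = 0 := by
    intro v hv
    have h1 : (inner ℝ (Y v) (Y v) : ℝ) = 0 := by
      have h2 : (inner ℝ (Y v) (Y v) : ℝ) = inner ℝ v (Y (Y v)) := by
        rw [← hsym v (Y v), real_inner_comm]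
      rw [h2, happ v, hv, mul_zero, zero_smul, inner_zero_right]
    exact inner_self_eq_zero.mp h1
  set t : ℝ := inner ℝ u (Y u) with ht
  have htY : Y u = t • u := by
    set v : H := Y u - t • u with hv
    have hvperp : (inner ℝ u v : ℝ) = 0 := by
      simp [hv, inner_sub_right, real_inner_smul_right, huu, ht, hu]
    have hvv : (inner ℝ v v : ℝ) = 0 := by
      have h3 : (inner ℝ (Y u) v : ℝ) = 0 := by
        rw [hsym u v, hker v hvperp, inner_zero_right]
      nth_rewrite 1 [hv]; rw [inner_sub_left, real_inner_smul_left, hvperp, h3]; ring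
    have h0 : v = 0 := inner_self_eq_zero.mp hvv
    have := sub_eq_zero.mp h0
    simpa [hv] using this
  have ht0 : 0 ≤ t := by
    have := hY.2 u
    rw [ContinuousLinearMap.reApplyInnerSelf] at this
    simpa [real_inner_comm, ht] using this
  have htc : t ^ 2 = c := by
    have h4 : (inner ℝ u (Y (Y u)) : ℝ) = c := by
      rw [happ u, real_inner_smul_right, huu]; ring
    rw [htY] at h4
    rw [map_smul, real_inner_smul_right, ← ht] at h4
    simpa [sq] using h4
  have hst : Real.sqrt c = t := by
    rw [← htc, Real.sqrt_sq ht0]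
  ext x
  have hxd : Y x = (inner ℝ u x : ℝ) • Y u + Y (x - (inner ℝ u x : ℝ) • u) := by
    rw [← map_smul, ← map_add]; congr 1; abel
  have hperp : (inner ℝ u (x - (inner ℝ u x : ℝ) • u) : ℝ) = 0 := by
    simp [inner_sub_right, real_inner_smul_right, huu, hu]
  rw [ContinuousLinearMap.smul_apply, ContinuousLinearMap.smulRight_apply, innerSL_apply_apply,
    hxd, hker _ hperp, add_zero, htY, hst, smul_smul, smul_smul, mul_comm]

theorem stmt16 {H : Type*} [NormedAddCommGroup H] [InnerProductSpace ℝ H] [CompleteSpace H]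
    (N : ℕ) (C : Fin N → H →L[ℝ] H) (w : Fin N → ℝ)
    (hC : ∀ i, (C i).IsPositive) (hw : ∀ i, 0 < w i) (hws : ∑ i, w i = 1)
    (u : H) (hu : ‖u‖ = 1)
    (hpos : 0 < ∑ i, w i * Real.sqrt (inner ℝ u ((C i) u) : ℝ)) :
    let P : H →L[ℝ] H := (innerSL ℝ u).smulRight u
    let xu : ℝ := (∑ i, w i * Real.sqrt (inner ℝ u ((C i) u) : ℝ)) ^ 2
    (∀ Y : H →L[ℝ] H, Y.IsPositive → Y ∘L Y = xu • P →
      ∀ Z : Fin N → H →L[ℝ] H, (∀ i, (Z i).IsPositive) →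
        (∀ i, (Z i) ∘L (Z i) = Y ∘L (C i) ∘L Y) →
        ∑ i, w i • Z i = xu • P) ∧
    (∀ Y : H →L[ℝ] H, Y.IsPositive → Y ∘L Y = 0 →
      ∀ Z : Fin N → H →L[ℝ] H, (∀ i, (Z i).IsPositive) →
        (∀ i, (Z i) ∘L (Z i) = Y ∘L (C i) ∘L Y) →
        ∑ i, w i • Z i = 0) := by
  intro P xu
  set s : ℝ := ∑ i, w i * Real.sqrt (inner ℝ u ((C i) u) : ℝ) with hs
  have hxu : xu = s ^ 2 := rfl
  have huu : (inner ℝ u u : ℝ) = 1 := by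
    rw [real_inner_self_eq_norm_sq, hu]; norm_num
  have ha : ∀ i, (0:ℝ) ≤ inner ℝ u ((C i) u) := by
    intro i
    have := (hC i).2 u
    rw [ContinuousLinearMap.reApplyInnerSelf] at this
    simpa [real_inner_comm] using this
  constructor
  · intro Y hY hY2 Z hZ hZ2
    have hYeq : Y = s • P := by
      have := sqrt_rankone u hu xu Y hY hY2
      rwa [hxu, Real.sqrt_sq hpos.le] at this
    have hPCP : ∀ i, P ∘L (C i) ∘L P = (inner ℝ u ((C i) u) : ℝ) • P := by
      intro i
      ext x
      show ((innerSL ℝ u).smulRight u) ((C i) (((innerSL ℝ u).smulRight u) x))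
          = (inner ℝ u ((C i) u) : ℝ) • ((innerSL ℝ u).smulRight u) x
      simp only [ContinuousLinearMap.smulRight_apply, innerSL_apply_apply, map_smul,
        real_inner_smul_right, smul_smul]
      rw [mul_comm]
    have hZsq : ∀ i, Z i ∘L Z i = (xu * inner ℝ u ((C i) u)) • P := by
      intro i
      rw [hZ2 i, hYeq]
      simp only [ContinuousLinearMap.comp_smul, ContinuousLinearMap.smul_comp, smul_smul]
      rw [hPCP i, smul_smul, hxu]
      congr 1
      ring
    have hZeq : ∀ i, Z i = (s * Real.sqrt (inner ℝ u ((C i) u) : ℝ)) • P := by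
      intro i
      have := sqrt_rankone u hu _ (Z i) (hZ i) (hZsq i)
      rwa [hxu, Real.sqrt_mul (sq_nonneg s), Real.sqrt_sq hpos.le] at this
    calc ∑ i, w i • Z i
        = ∑ i, (w i * (s * Real.sqrt (inner ℝ u ((C i) u) : ℝ))) • P := by
          refine Finset.sum_congr rfl fun i _ => ?_
          rw [hZeq i, smul_smul]
      _ = (∑ i, w i * (s * Real.sqrt (inner ℝ u ((C i) u) : ℝ))) • P := by
          rw [Finset.sum_smul]
      _ = xu • P := by
          congr 1
          rw [hxu]
          have : ∑ i, w i * (s * Real.sqrt (inner ℝ u ((C i) u) : ℝ))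
              = s * ∑ i, w i * Real.sqrt (inner ℝ u ((C i) u) : ℝ) := by
            rw [Finset.mul_sum]; refine Finset.sum_congr rfl fun i _ => by ring
          rw [this, ← hs, sq]
  · intro Y hY hY2 Z hZ hZ2
    have hYeq : Y = 0 := by
      have := sqrt_rankone u hu 0 Y hY (by rw [hY2, zero_smul])
      simpa using this
    have hZeq : ∀ i, Z i = 0 := by
      intro i
      have h0 : Z i ∘L Z i = (0:ℝ) • P := by
        rw [hZ2 i, hYeq, zero_smul]
        ext x; simp
      have := sqrt_rankone u hu 0 (Z i) (hZ i) h0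
      simpa using this
    simp [hZeq]
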